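/- Let V ⊂ ℝ be a compact interval and E ⊂ V a measurable subset of positive measure. Then for every polynomial p of degree at most k−1, sup_{x∈V} |p(x)| ≤ (4|V|/|E|)^{k-1} · sup_{x∈E} |p(x)|, where |·| denotes Lebesgue measure. -/

import Mathlib

open MeasureTheory Set Polynomial Real Finset
open Polynomial

lemma cheb_deg_coeff : ∀ n : ℕ, (Chebyshev.T ℝ n).natDegree ≤ n ∧ (Chebyshev.T ℝ n).coeff n = 2 ^ (n - 1) := by
  intro n
  induction n using Nat.twoStepInduction with
  | zero => simp [Chebyshev.T_zero]
  | one => simp [Chebyshev.T_one]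
  | more n ih1 ih2 =>
    have hcast : ((n + 2 : ℕ) : ℤ) = (n : ℤ) + 2 := by push_cast; ring
    have hc1 : ((n + 1 : ℕ) : ℤ) = (n : ℤ) + 1 := by push_cast; ring
    have hrec := Chebyshev.T_add_two ℝ (n : ℤ)
    rw [← hc1, ← hcast] at hrec
    rw [hrec]
    have e2 : (2 : ℝ[X]) * X * Chebyshev.T ℝ (n+1:ℕ) = C 2 * (X * Chebyshev.T ℝ (n+1:ℕ)) := by
      rw [← mul_assoc, (map_ofNat C 2).symm]
    rw [e2]
    have hXT : (X * Chebyshev.T ℝ (n+1:ℕ)).natDegree ≤ n + 2 := by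
      refine natDegree_mul_le.trans ?_
      simp only [natDegree_X]
      omega
    constructor
    · refine (natDegree_sub_le _ _).trans (max_le ?_ (ih1.1.trans (by omega)))
      refine natDegree_mul_le.trans ?_
      simpa using hXT
    · rw [coeff_sub, coeff_C_mul, coeff_X_mul, ih2.2,
        coeff_eq_zero_of_natDegree_lt (lt_of_le_of_lt ih1.1 (by omega))]
      simp [pow_succ]
      ring

lemma cheb_nodes (k : ℕ) (hk : 1 ≤ k) :
    ∃ t : Fin k → ℝ, Function.Injective t ∧ (∀ i, -1 < t i ∧ t i ≤ 1) ∧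
      ∀ i : Fin k, (k : ℝ) / 2 ^ (k - 1) ≤ ∏ j ∈ Finset.univ.erase i, |t i - t j| := by
  have hkR : (0:ℝ) < k := by exact_mod_cast hk
  set θ : Fin k → ℝ := fun i => (2 * (i:ℕ) + 1) * π / (2 * k) with hθ
  have hθmem : ∀ i : Fin k, 0 < θ i ∧ θ i < π := by
    intro i
    constructor
    · apply div_pos (by positivity) (by positivity)
    · rw [div_lt_iff₀ (by positivity)]
      have h2i : (2 * (i:ℕ) + 1 : ℝ) < 2 * k := by
        have := i.2
        have : (2 * (i:ℕ) + 1 : ℕ) < 2 * k := by omega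
        exact_mod_cast this
      nlinarith [pi_pos]
  have hkθ : ∀ i : Fin k, (k : ℝ) * θ i = (i:ℕ) * π + π / 2 := by
    intro i
    rw [hθ]
    field_simp
  have hcos0 : ∀ i : Fin k, Real.cos ((k:ℝ) * θ i) = 0 := by
    intro i
    rw [hkθ, Real.cos_add, Real.cos_pi_div_two, Real.sin_pi_div_two, Real.sin_nat_mul_pi]
    ring
  have hsin1 : ∀ i : Fin k, |Real.sin ((k:ℝ) * θ i)| = 1 := by
    intro i
    have e : Real.sin ((k:ℝ) * θ i) = Real.cos ((i:ℕ) * π) := by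
      rw [hkθ, Real.sin_add, Real.cos_pi_div_two, Real.sin_pi_div_two, Real.sin_nat_mul_pi]
      ring
    rw [e]
    have h := Real.sin_sq_add_cos_sq ((i:ℕ) * π)
    rw [Real.sin_nat_mul_pi] at h
    have h2 : |Real.cos ((i:ℕ) * π)| ^ 2 = 1 := by rw [sq_abs]; nlinarith
    have h3 : (|Real.cos ((i:ℕ) * π)| - 1) * (|Real.cos ((i:ℕ) * π)| + 1) = 0 := by
      linear_combination h2
    have h4 := abs_nonneg (Real.cos ((i:ℕ) * π))
    rcases mul_eq_zero.mp h3 with h5 | h5 <;> linarith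
  set t : Fin k → ℝ := fun i => Real.cos (θ i) with ht
  have htinj : Function.Injective t := by
    intro i j hij
    have hθij : θ i = θ j := by
      apply Real.injOn_cos ⟨(hθmem i).1.le, (hθmem i).2.le⟩ ⟨(hθmem j).1.le, (hθmem j).2.le⟩ hij
    have h6 : ((i:ℕ):ℝ) = ((j:ℕ):ℝ) := by
      have hπ := pi_pos
      rw [hθ] at hθij
      field_simp at hθij
      linarith [hθij]
    exact Fin.ext (by exact_mod_cast h6)
  have hrange : ∀ i, -1 < t i ∧ t i ≤ 1 := by
    intro i
    refine ⟨?_, Real.cos_le_one _⟩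
    have := Real.cos_lt_cos_of_nonneg_of_le_pi (hθmem i).1.le le_rfl (hθmem i).2
    rw [Real.cos_pi] at this
    exact this
  refine ⟨t, htinj, hrange, ?_⟩
  -- the polynomial identity
  set c : ℝ := 2 ^ (k - 1) with hc
  have hcpos : (0:ℝ) < c := by positivity
  set w : ℝ[X] := Lagrange.nodal Finset.univ t with hw
  have hdegc := cheb_deg_coeff k
  have hfne : Chebyshev.T ℝ k ≠ 0 := fun h => by
    have h2 := hdegc.2
    rw [h] at h2
    simp only [coeff_zero] at h2
    exact (by positivity : (0:ℝ) < 2 ^ (k-1)).ne h2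
  have hndeg : (Chebyshev.T ℝ k).natDegree = k := by
    refine le_antisymm hdegc.1 (le_natDegree_of_ne_zero ?_)
    rw [hdegc.2]; positivity
  have hdegT : (Chebyshev.T ℝ k).degree = k := by
    rw [degree_eq_natDegree hfne, hndeg]
  have hlcT : (Chebyshev.T ℝ k).leadingCoeff = c := by
    rw [leadingCoeff, hndeg, hdegc.2]
  have hdegw : (C c * w).degree = k := by
    rw [degree_C_mul hcpos.ne', hw, Lagrange.degree_nodal]
    simp
  have hlcw : (C c * w).leadingCoeff = c := by
    rw [leadingCoeff_mul, leadingCoeff_C, Lagrange.nodal_monic, mul_one]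
  have hTw : Chebyshev.T ℝ k = C c * w := by
    apply Polynomial.eq_of_degree_sub_lt_of_eval_index_eq (v := t) Finset.univ
      (Function.Injective.injOn htinj)
    · refine lt_of_lt_of_le (degree_sub_lt (hdegT.trans hdegw.symm) hfne (hlcT.trans hlcw.symm)) ?_
      rw [hdegT]
      simp
    · intro i _
      rw [eval_mul, hw, Lagrange.eval_nodal_at_node (Finset.mem_univ i), mul_zero]
      have h := Chebyshev.T_real_cos (θ i) (k : ℤ)
      push_cast at h
      exact h.trans (hcos0 i)
  -- derivative identity
  intro i
  have hderiv : derivative (Chebyshev.T ℝ k) = (C c) * derivative w := by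
    rw [hTw, derivative_mul, derivative_C, zero_mul, zero_add]
  have hU := Chebyshev.T_derivative_eq_U (R := ℝ) (k : ℤ)
  have hUeval := Chebyshev.U_real_cos (θ i) ((k : ℤ) - 1)
  have hkey : c * (eval (t i) (derivative w)) * Real.sin (θ i) = (k:ℝ) * Real.sin ((k:ℝ) * θ i) := by
    have h1 : eval (t i) (derivative (Chebyshev.T ℝ k)) = (k:ℝ) * eval (t i) (Chebyshev.U ℝ ((k:ℤ) - 1)) := by
      rw [hU]
      simp
    have h2 : eval (t i) (derivative (Chebyshev.T ℝ k)) = c * eval (t i) (derivative w) := by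
      rw [hderiv, eval_mul, eval_C]
    have h3 : eval (t i) (Chebyshev.U ℝ ((k:ℤ) - 1)) * Real.sin (θ i) = Real.sin ((k:ℝ) * θ i) := by
      have h := hUeval
      push_cast at h
      rw [show ((k:ℝ) - 1 + 1) = (k:ℝ) by ring] at h
      exact h
    rw [← h3]
    linear_combination Real.sin (θ i) * (h2.symm.trans h1)
  have hsinpos : 0 < Real.sin (θ i) := Real.sin_pos_of_pos_of_lt_pi (hθmem i).1 (hθmem i).2
  have hsinle : Real.sin (θ i) ≤ 1 := Real.sin_le_one _
  have hprod : ∏ j ∈ Finset.univ.erase i, |t i - t j| = |eval (t i) (derivative w)| := by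
    rw [hw, Lagrange.eval_nodal_derivative_eval_node_eq (Finset.mem_univ i),
      Lagrange.eval_nodal, Finset.abs_prod]
  rw [hprod]
  have habs : c * |eval (t i) (derivative w)| * Real.sin (θ i) = (k:ℝ) := by
    have := congrArg abs hkey
    rw [abs_mul, abs_mul, abs_of_pos hcpos, abs_of_pos hsinpos, abs_mul, hsin1,
      Nat.abs_cast, mul_one] at this
    exact this
  rw [hc]
  rw [div_le_iff₀ (by positivity)]
  nlinarith [abs_nonneg (eval (t i) (derivative w))]

open MeasureTheory Set

section Pick
variable (a b : ℝ) (E : Set ℝ)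

noncomputable def Fcdf (x : ℝ) : ℝ := (volume (E ∩ Set.Iic x)).toReal

variable {a b E}

lemma Ffin (hE : E ⊆ Set.Icc a b) (x : ℝ) : volume (E ∩ Set.Iic x) ≠ ⊤ := by
  refine ((measure_mono (inter_subset_left.trans hE)).trans_lt ?_).ne
  rw [Real.volume_Icc]
  exact ENNReal.ofReal_lt_top

lemma Fmono (hE : E ⊆ Set.Icc a b) {x y : ℝ} (hxy : x ≤ y) : Fcdf E x ≤ Fcdf E y :=
  ENNReal.toReal_mono (Ffin hE y) (measure_mono (inter_subset_inter_right _ (Set.Iic_subset_Iic.mpr hxy)))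

lemma Flip (hE : E ⊆ Set.Icc a b) {x y : ℝ} (hxy : x ≤ y) :
    Fcdf E y ≤ Fcdf E x + (y - x) := by
  have hsub : E ∩ Set.Iic y ⊆ (E ∩ Set.Iic x) ∪ Set.Ioc x y := by
    rintro z ⟨hzE, hz⟩
    rcases le_or_gt z x with h | h
    · exact Or.inl ⟨hzE, h⟩
    · exact Or.inr ⟨h, hz⟩
  have h1 : volume (E ∩ Set.Iic y) ≤ volume (E ∩ Set.Iic x) + ENNReal.ofReal (y - x) := by
    refine (measure_mono hsub).trans ?_
    refine (measure_union_le _ _).trans ?_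
    rw [Real.volume_Ioc]
  have h2 := ENNReal.toReal_mono (by
      refine ENNReal.add_ne_top.mpr ⟨Ffin hE x, ENNReal.ofReal_ne_top⟩) h1
  rw [ENNReal.toReal_add (Ffin hE x) ENNReal.ofReal_ne_top,
    ENNReal.toReal_ofReal (by linarith)] at h2
  exact h2

lemma Fcont (hE : E ⊆ Set.Icc a b) : Continuous (Fcdf E) := by
  have : LipschitzWith 1 (Fcdf E) := by
    apply LipschitzWith.of_dist_le_mul
    intro x y
    rw [Real.dist_eq, Real.dist_eq, NNReal.coe_one, one_mul]
    rcases le_total x y with h | h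
    · have h1 := Fmono hE h
      have h2 := Flip hE h
      rw [abs_of_nonpos (by linarith), abs_of_nonpos (by linarith)]
      linarith
    · have h1 := Fmono hE h
      have h2 := Flip hE h
      rw [abs_of_nonneg (by linarith), abs_of_nonneg (by linarith)]
      linarith
  exact this.continuous

lemma pick_node (hab : a ≤ b) (hE : E ⊆ Set.Icc a b) {c : ℝ}
    (hc0 : 0 < c) (hcμ : c ≤ (volume E).toReal) :
    ∃ x, x ∈ closure E ∧ Fcdf E x = c := by
  have hFa : Fcdf E a = 0 := by
    have : volume (E ∩ Set.Iic a) = 0 := by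
      refine measure_mono_null (t := {a}) (fun z hz => ?_) Real.volume_singleton
      have h1 := (hE hz.1).1
      have h2 := hz.2
      simp only [Set.mem_singleton_iff, Set.mem_Iic] at *
      linarith
    simp [Fcdf, this]
  have hFb : Fcdf E b = (volume E).toReal := by
    have : E ∩ Set.Iic b = E := Set.inter_eq_left.mpr (fun z hz => (hE hz).2)
    rw [Fcdf, this]
  have hIVT := intermediate_value_Icc hab (Fcont hE).continuousOn
  have hcmem : c ∈ Set.Icc (Fcdf E a) (Fcdf E b) := by
    rw [hFa, hFb]; exact ⟨hc0.le, hcμ⟩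
  obtain ⟨x0, hx0mem, hx0⟩ := hIVT hcmem
  set S : Set ℝ := Set.Icc a b ∩ {x | Fcdf E x = c} with hS
  have hSne : S.Nonempty := ⟨x0, hx0mem, hx0⟩
  have hSbdd : BddBelow S := ⟨a, fun y hy => hy.1.1⟩
  have hScl : IsClosed S := isClosed_Icc.inter (isClosed_eq (Fcont hE) continuous_const)
  set x₁ := sInf S with hx₁
  have hx₁S : x₁ ∈ S := hScl.csInf_mem hSne hSbdd
  refine ⟨x₁, ?_, hx₁S.2⟩
  rw [Metric.mem_closure_iff]
  intro ε hε
  have hFless : Fcdf E (x₁ - ε/2) < c := by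
    rcases lt_or_ge (x₁ - ε/2) a with h | h
    · calc Fcdf E (x₁ - ε/2) ≤ Fcdf E a := Fmono hE h.le
        _ = 0 := hFa
        _ < c := hc0
    · have hle : Fcdf E (x₁ - ε/2) ≤ c := by
        rw [← hx₁S.2]; exact Fmono hE (by linarith)
      rcases lt_or_eq_of_le hle with h' | h'
      · exact h'
      · exfalso
        have hmem : (x₁ - ε/2) ∈ S := ⟨⟨h, by linarith [hx₁S.1.2]⟩, h'⟩
        have := csInf_le hSbdd hmem
        rw [← hx₁] at this
        linarith
  rcases (E ∩ Set.Ioc (x₁ - ε/2) x₁).eq_empty_or_nonempty with hem | ⟨y, hyE, hyI⟩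
  · exfalso
    rw [Set.eq_empty_iff_forall_notMem] at hem
    have hsub : E ∩ Set.Iic x₁ ⊆ E ∩ Set.Iic (x₁ - ε/2) := by
      rintro z ⟨hzE, hz⟩
      refine ⟨hzE, ?_⟩
      by_contra hz2
      simp only [Set.mem_Iic, not_le] at hz2
      exact hem z ⟨hzE, hz2, hz⟩
    have hmono : Fcdf E x₁ ≤ Fcdf E (x₁ - ε/2) :=
      ENNReal.toReal_mono (Ffin hE _) (measure_mono hsub)
    rw [hx₁S.2] at hmono
    linarith
  · refine ⟨y, hyE, ?_⟩
    rw [Real.dist_eq, abs_of_nonneg (by linarith [hyI.2])]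
    linarith [hyI.1, hyI.2]
end Pick


open Polynomial Finset Real in
/-- Remez' inequality on the real line. -/
theorem stmt_1 (k : ℕ) (hk : 1 ≤ k) (a b : ℝ) (hab : a ≤ b) (E : Set ℝ)
    (hE : E ⊆ Set.Icc a b) (hEmeas : MeasurableSet E) (hEpos : 0 < volume E)
    (p : Polynomial ℝ) (hdeg : p.natDegree ≤ k - 1) :
    (⨆ x : Set.Icc a b, |p.eval (x : ℝ)|)
      ≤ (4 * (volume (Set.Icc a b)).toReal / (volume E).toReal) ^ (k - 1)
          * (⨆ x : E, |p.eval (x : ℝ)|) := by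
  classical
  set n := k - 1 with hn
  set μ := (volume E).toReal with hμ
  have hfinE : volume E ≠ ⊤ :=
    ((measure_mono hE).trans_lt (by rw [Real.volume_Icc]; exact ENNReal.ofReal_lt_top)).ne
  have hμpos : 0 < μ := ENNReal.toReal_pos hEpos.ne' hfinE
  have hVol : (volume (Set.Icc a b)).toReal = b - a := by
    rw [Real.volume_Icc, ENNReal.toReal_ofReal (by linarith)]
  set L := b - a with hL
  have hL0 : 0 ≤ L := by simp [hL]; linarith
  have hkR : (0:ℝ) < k := by exact_mod_cast hk
  obtain ⟨t, htinj, htrange, htprod⟩ := cheb_nodes k hk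
  set c : Fin k → ℝ := fun i => μ/2 * (1 + t i) with hc
  have hc0 : ∀ i, 0 < c i := fun i => by
    have h1 := (htrange i).1
    have : (0:ℝ) < 1 + t i := by linarith
    positivity
  have hcμ : ∀ i, c i ≤ μ := fun i => by
    have h1 := (htrange i).2
    rw [hc]
    nlinarith
  have hpick : ∀ i : Fin k, ∃ x, x ∈ closure E ∧ Fcdf E x = c i :=
    fun i => pick_node hab hE (hc0 i) (hcμ i)
  choose X hXcl hXF using hpick
  have hclE : closure E ⊆ Set.Icc a b := closure_minimal hE isClosed_Icc
  have hXmem : ∀ i, X i ∈ Set.Icc a b := fun i => hclE (hXcl i)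
  have hsepkey : ∀ i j : Fin k, c i - c j ≤ |X i - X j| := by
    intro i j
    rcases le_total (X i) (X j) with h | h
    · have h1 := Fmono hE h
      rw [hXF, hXF] at h1
      have h2 := abs_nonneg (X i - X j)
      linarith
    · have h2 := Flip hE h
      rw [hXF, hXF] at h2
      calc c i - c j ≤ X i - X j := by linarith
        _ ≤ |X i - X j| := le_abs_self _
  have hsep : ∀ i j : Fin k, μ/2 * |t i - t j| ≤ |X i - X j| := by
    intro i j
    have h1 := hsepkey i j
    have h2 := hsepkey j i
    have h3 : |X j - X i| = |X i - X j| := abs_sub_comm _ _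
    have h4 : |c i - c j| ≤ |X i - X j| := abs_le.mpr ⟨by linarith, by linarith⟩
    have h5 : |c i - c j| = μ/2 * |t i - t j| := by
      rw [hc]
      simp only []
      rw [show μ/2 * (1 + t i) - μ/2 * (1 + t j) = μ/2 * (t i - t j) by ring,
        abs_mul, abs_of_pos (by linarith : (0:ℝ) < μ/2)]
    linarith
  have hXinj : Function.Injective X := by
    intro i j hij
    by_contra hne
    have hti : t i ≠ t j := fun h => hne (htinj h)
    have habs : 0 < |t i - t j| := abs_pos.mpr (sub_ne_zero.mpr hti)
    have := hsep i j
    rw [hij, sub_self, abs_zero] at this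
    nlinarith
  -- sup over E
  have hEne : E.Nonempty := by
    by_contra h
    rw [Set.not_nonempty_iff_eq_empty] at h
    rw [h] at hEpos
    simp at hEpos
  haveI := hEne.to_subtype
  haveI : Nonempty (Set.Icc a b) := ⟨⟨a, le_refl a, hab⟩⟩
  have hcontabs : Continuous fun y : ℝ => |p.eval y| := continuous_abs.comp p.continuous
  have hbddE : BddAbove (Set.range fun x : E => |p.eval (x:ℝ)|) := by
    have hcomp : BddAbove ((fun y : ℝ => |p.eval y|) '' Set.Icc a b) :=
      (isCompact_Icc.image hcontabs).bddAbove
    refine BddAbove.mono ?_ hcomp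
    rintro v ⟨x, rfl⟩
    exact ⟨x, hE x.2, rfl⟩
  set Ssup := ⨆ x : E, |p.eval (x:ℝ)| with hSsup
  have hXS : ∀ i, |p.eval (X i)| ≤ Ssup := by
    intro i
    have hsub : closure E ⊆ {y : ℝ | |p.eval y| ≤ Ssup} :=
      closure_minimal (fun y hy => le_ciSup hbddE ⟨y, hy⟩)
        (isClosed_le hcontabs continuous_const)
    exact hsub (hXcl i)
  obtain ⟨y₀, hy₀⟩ := hEne
  have hS0 : 0 ≤ Ssup := le_trans (abs_nonneg _) (le_ciSup hbddE ⟨y₀, hy₀⟩)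
  -- Lagrange interpolation
  have hcard : (Finset.univ : Finset (Fin k)).card = k := by simp
  have hdegp : p.degree < ((Finset.univ : Finset (Fin k)).card : WithBot ℕ) := by
    refine lt_of_le_of_lt degree_le_natDegree ?_
    rw [hcard]
    exact_mod_cast (by omega : p.natDegree < k)
  have hinterp := Lagrange.eq_interpolate (s := (Finset.univ : Finset (Fin k))) (v := X)
    hXinj.injOn hdegp
  set B := (4 * L / μ) ^ n with hB
  have hB0 : 0 ≤ B := by positivity
  -- bound each basis polynomial
  have hbasisbd : ∀ (x : ℝ), x ∈ Set.Icc a b → ∀ i : Fin k,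
      |eval x (Lagrange.basis Finset.univ X i)| ≤ B / k := by
    intro x hx i
    have hxab : a ≤ x ∧ x ≤ b := hx
    have hme : (Finset.univ.erase i).card = n := by
      rw [Finset.card_erase_of_mem (Finset.mem_univ i), hcard]
    have hev : |eval x (Lagrange.basis Finset.univ X i)|
        = ∏ j ∈ Finset.univ.erase i, |x - X j| / |X i - X j| := by
      rw [Lagrange.basis, eval_prod, Finset.abs_prod]
      refine Finset.prod_congr rfl fun j hj => ?_
      rw [Lagrange.basisDivisor, eval_mul, eval_C, eval_sub, eval_X, eval_C, abs_mul, abs_inv]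
      rw [inv_mul_eq_div]
    rw [hev]
    have hfac : ∀ j ∈ Finset.univ.erase i,
        |x - X j| / |X i - X j| ≤ L / (μ/2 * |t i - t j|) := by
      intro j hj
      have hji : j ≠ i := Finset.ne_of_mem_erase hj
      have hti : t i ≠ t j := fun h => hji.symm (htinj h)
      have htpos : 0 < |t i - t j| := abs_pos.mpr (sub_ne_zero.mpr hti)
      have hdpos : 0 < μ/2 * |t i - t j| := by positivity
      have hnum : |x - X j| ≤ L := by
        have h1 := (hXmem j).1
        have h2 := (hXmem j).2
        exact abs_le.mpr ⟨by simp [hL]; linarith [hxab.1, hxab.2], by simp [hL]; linarith [hxab.1, hxab.2]⟩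
      exact div_le_div₀ hL0 hnum hdpos (hsep i j)
    refine le_trans (Finset.prod_le_prod (fun j hj => by positivity) hfac) ?_
    rw [Finset.prod_div_distrib, Finset.prod_const, Finset.prod_mul_distrib,
      Finset.prod_const, hme]
    have hprodt := htprod i
    have hppos : (0:ℝ) < ∏ j ∈ Finset.univ.erase i, |t i - t j| := by
      refine Finset.prod_pos fun j hj => ?_
      have hji : j ≠ i := Finset.ne_of_mem_erase hj
      have hti : t i ≠ t j := fun h => hji.symm (htinj h)
      exact abs_pos.mpr (sub_ne_zero.mpr hti)
    have hkn : k - 1 = n := hn.symm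
    rw [hkn] at hprodt
    have step1 : L ^ n / ((μ/2) ^ n * ∏ j ∈ Finset.univ.erase i, |t i - t j|)
        ≤ L ^ n / ((μ/2) ^ n * ((k:ℝ) / 2 ^ n)) := by
      gcongr
    refine step1.trans ?_
    have h24 : (4:ℝ)^n = 2^n * 2^n := by rw [← mul_pow]; norm_num
    have heq : L ^ n / ((μ/2) ^ n * ((k:ℝ) / 2 ^ n)) = B / k := by
      rw [hB, div_pow (4 * L) μ n, div_pow μ 2 n, mul_pow 4 L n, h24]
      field_simp
    rw [heq]
  -- final sum bound
  refine ciSup_le fun x => ?_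
  have hx := x.2
  have heval : p.eval (x:ℝ) = ∑ i : Fin k, p.eval (X i) * eval (x:ℝ) (Lagrange.basis Finset.univ X i) := by
    conv_lhs => rw [hinterp]
    rw [Lagrange.interpolate_apply, eval_finset_sum]
    refine Finset.sum_congr rfl fun i _ => ?_
    rw [eval_mul, eval_C]
  rw [hVol]
  calc |p.eval (x:ℝ)| ≤ ∑ i : Fin k, |p.eval (X i)| * |eval (x:ℝ) (Lagrange.basis Finset.univ X i)| := by
        rw [heval]
        refine (Finset.abs_sum_le_sum_abs _ _).trans ?_
        refine Finset.sum_le_sum fun i _ => ?_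
        rw [abs_mul]
    _ ≤ ∑ _i : Fin k, Ssup * (B / k) := by
        refine Finset.sum_le_sum fun i _ => ?_
        exact mul_le_mul (hXS i) (hbasisbd (x:ℝ) hx i) (abs_nonneg _) hS0
    _ = B * Ssup := by
        rw [Finset.sum_const, hcard, nsmul_eq_mul]
        field_simp
    _ = (4 * L / μ) ^ (k-1) * Ssup := by rw [hB, hn]
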